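/- (SparseMix compression optimality) Let p ∈ [0,1]^D, and for T ∈ [0,1] define q_i(T) = p_i if p_i ≤ T and 1 - p_i otherwise, Z(T) = Σ_i q_i(T), and the cost cost_T = Σ_i q_i(T) · (−log(q_i(T)/Z(T))) (with the convention 0·log 0 = 0). If 1/2 ≤ T₁ ≤ T₂ ≤ 1 and Z(T₁) ≥ 1, then cost_{T₁} ≤ cost_{T₂}. -/

import Mathlib

open Real Finset

lemma gmono {S : ℝ} (hS : 0 ≤ S) :
    MonotoneOn (fun x => Real.negMulLog x - Real.negMulLog (x + S)) (Set.Ici 0) := by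
  apply monotoneOn_of_deriv_nonneg (convex_Ici 0)
  · exact (Real.continuous_negMulLog.sub (Real.continuous_negMulLog.comp
      (continuous_id.add continuous_const))).continuousOn
  · intro x hx
    rw [interior_Ici] at hx
    have hx0 : (0:ℝ) < x := hx
    have h1 : DifferentiableAt ℝ Real.negMulLog x := Real.differentiableAt_negMulLog hx0.ne'
    have h2 : DifferentiableAt ℝ (fun x => Real.negMulLog (x + S)) x :=
      (Real.differentiableAt_negMulLog (by positivity : (0:ℝ) < x + S).ne').comp x
        ((differentiableAt_id).add (differentiableAt_const S))
    exact (h1.sub h2).differentiableWithinAt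
  · intro x hx
    rw [interior_Ici] at hx
    have hx0 : (0:ℝ) < x := hx
    have hxS : (0:ℝ) < x + S := by positivity
    have hd : HasDerivAt (fun x => Real.negMulLog x - Real.negMulLog (x + S))
        ((-Real.log x - 1) - (-Real.log (x + S) - 1)) x := by
      exact (Real.hasDerivAt_negMulLog hx0.ne').sub
        (by have h := ((Real.hasDerivAt_negMulLog hxS.ne').comp x
              ((hasDerivAt_id x).add_const S)); exact h.congr_deriv (by ring))
    rw [hd.deriv]
    have := Real.log_le_log hx0 (by linarith : x ≤ x + S)
    linarith

lemma Fmono {D : ℕ} (a b : Fin D → ℝ) (ha : ∀ i, 0 ≤ a i) (hab : ∀ i, a i ≤ b i) :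
    (∑ i, Real.negMulLog (a i)) - Real.negMulLog (∑ i, a i) ≤
    (∑ i, Real.negMulLog (b i)) - Real.negMulLog (∑ i, b i) := by
  have key : ∀ s : Finset (Fin D),
      (∑ i, Real.negMulLog (a i)) - Real.negMulLog (∑ i, a i) ≤
      (∑ i, Real.negMulLog (if i ∈ s then b i else a i)) -
        Real.negMulLog (∑ i, if i ∈ s then b i else a i) := by
    intro s
    induction s using Finset.induction_on with
    | empty => simp
    | @insert j s hj ih =>
      refine ih.trans ?_
      set v : Fin D → ℝ := fun i => if i ∈ s then b i else a i with hv
      have hv' : ∀ i, (if i ∈ insert j s then b i else a i) =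
          if i = j then b j else v i := by
        intro i
        by_cases h : i = j
        · subst h; simp
        · simp [Finset.mem_insert, h, hv]
      have hvnn : ∀ i, 0 ≤ v i := by
        intro i; by_cases h : i ∈ s <;> simp [hv, h]
        exacts [(ha i).trans (hab i), ha i]
      set S : ℝ := ∑ i ∈ Finset.univ.erase j, v i with hS
      have hSnn : 0 ≤ S := Finset.sum_nonneg fun i _ => hvnn i
      have hsum1 : ∑ i, v i = a j + S := by
        rw [hS, ← Finset.add_sum_erase _ v (Finset.mem_univ j)]
        simp [hv, hj]
      have hsum2 : (∑ i, if i ∈ insert j s then b i else a i) = b j + S := by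
        simp_rw [hv']
        rw [← Finset.add_sum_erase _ _ (Finset.mem_univ j)]
        simp only [if_pos rfl]
        congr 1
        exact Finset.sum_congr rfl fun i hi => by
          rw [if_neg (Finset.mem_erase.mp hi).1]
      have hsum3 : (∑ i, Real.negMulLog (if i ∈ insert j s then b i else a i)) =
          Real.negMulLog (b j) + ∑ i ∈ Finset.univ.erase j, Real.negMulLog (v i) := by
        simp_rw [hv']
        rw [← Finset.add_sum_erase _ _ (Finset.mem_univ j)]
        simp only [if_pos rfl]
        congr 1
        exact Finset.sum_congr rfl fun i hi => by
          rw [if_neg (Finset.mem_erase.mp hi).1]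
      have hsum4 : (∑ i, Real.negMulLog (v i)) =
          Real.negMulLog (a j) + ∑ i ∈ Finset.univ.erase j, Real.negMulLog (v i) := by
        rw [← Finset.add_sum_erase _ _ (Finset.mem_univ j)]
        congr 1
        simp [hv, hj]
      have hmono := gmono hSnn (Set.mem_Ici.mpr (ha j)) (Set.mem_Ici.mpr ((ha j).trans (hab j)))
        (hab j)
      simp only at hmono
      rw [hsum1, hsum2, hsum3, hsum4]
      linarith
  have := key Finset.univ
  simpa using this

/-- SparseMix compression optimality: for 1/2 ≤ T₁ ≤ T₂ ≤ 1 and Z(T₁) ≥ 1,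
    cost_{T₁} ≤ cost_{T₂}. -/
theorem stmt_2 (D : ℕ) (p : Fin D → ℝ) (hp : ∀ i, p i ∈ Set.Icc (0:ℝ) 1)
    (q : ℝ → Fin D → ℝ)
    (hq : ∀ T i, q T i = if p i ≤ T then p i else 1 - p i)
    (Z : ℝ → ℝ) (hZ : ∀ T, Z T = ∑ i, q T i)
    (cost : ℝ → ℝ)
    (hcost : ∀ T, cost T = ∑ i, q T i * (-(Real.logb 2 (q T i / Z T))))
    (T₁ T₂ : ℝ) (h1 : (1:ℝ)/2 ≤ T₁) (h12 : T₁ ≤ T₂) (h2 : T₂ ≤ 1)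
    (hZ1 : 1 ≤ Z T₁) :
    cost T₁ ≤ cost T₂ := by
  have hqnn : ∀ T i, 0 ≤ q T i := by
    intro T i
    rw [hq]
    rcases (hp i) with ⟨h0, h1'⟩
    split <;> linarith
  have hab : ∀ i, q T₁ i ≤ q T₂ i := by
    intro i
    rw [hq, hq]
    rcases (hp i) with ⟨h0, h1'⟩
    by_cases hA : p i ≤ T₁
    · rw [if_pos hA, if_pos (hA.trans h12)]
    · rw [if_neg hA]
      push_neg at hA
      split <;> linarith
  have hZ2 : Z T₁ ≤ Z T₂ := by
    rw [hZ, hZ]; exact Finset.sum_le_sum fun i _ => hab i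
  have hZ1pos : (0:ℝ) < Z T₁ := by linarith
  have hZ2pos : (0:ℝ) < Z T₂ := by linarith
  -- rewrite cost
  have hcost' : ∀ T, 0 < Z T →
      cost T = ((∑ i, Real.negMulLog (q T i)) - Real.negMulLog (Z T)) / Real.log 2 := by
    intro T hZpos
    rw [hcost, hZ]
    rw [← hZ]
    have : ∀ i, q T i * (-(Real.logb 2 (q T i / Z T))) =
        (Real.negMulLog (q T i) + q T i * Real.log (Z T)) / Real.log 2 := by
      intro i
      rcases eq_or_lt_of_le (hqnn T i) with h | h
      · rw [← h]; simp [Real.negMulLog]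
      · rw [Real.logb, Real.log_div h.ne' hZpos.ne', Real.negMulLog]
        field_simp
        ring
    rw [Finset.sum_congr rfl fun i _ => this i, ← Finset.sum_div, Finset.sum_add_distrib,
      ← Finset.sum_mul, ← hZ, Real.negMulLog]
    ring
  rw [hcost' T₁ hZ1pos, hcost' T₂ hZ2pos]
  have hlog2 : (0:ℝ) < Real.log 2 := Real.log_pos (by norm_num)
  apply div_le_div_of_nonneg_right ?_ hlog2.le |>.trans_eq rfl
  · rw [hZ, hZ]
    exact Fmono _ _ (hqnn T₁) hab
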